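/- If f is μ-strongly convex with L-Lipschitz gradient and 0 < η ≤ 2/(μ + L), the gradient map F(x) = x - η∇f(x) is a contraction with factor (1 - ημ), i.e., ‖F(x) - F(y)‖ ≤ (1 - ημ)‖x - y‖ whenever η ≤ 2/(μ+L); consequently the forward-backward map prox_{ηg} ∘ F is also a (1-ημ)-contraction and has a unique fixed point. -/

import Mathlib

open Set InnerProductSpace

section helpers

variable {E : Type*} [NormedAddCommGroup E] [InnerProductSpace ℝ E] [CompleteSpace E]

lemma grad_line_hasDerivAt' {c : E → ℝ} {c' : E → E} (hc : ∀ x, HasGradientAt c (c' x) x)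
    (x u : E) (t : ℝ) :
    HasDerivAt (fun s : ℝ => c (x + s • u)) ⟪c' (x + t • u), u⟫_ℝ t := by
  have hline : HasDerivAt (fun s : ℝ => x + s • u) u t := by
    simpa using ((hasDerivAt_id t).smul_const u).const_add x
  have := (hc (x + t • u)).hasFDerivAt.comp_hasDerivAt t hline
  simp at this; exact this

lemma convexOn_line' {c : E → ℝ} (hconv : ConvexOn ℝ univ c) (x u : E) :
    ConvexOn ℝ univ (fun s : ℝ => c (x + s • u)) := by
  constructor
  · exact convex_univ
  · intro s _ t _ a b ha hb hab
    have h := hconv.2 (mem_univ (x + s • u)) (mem_univ (x + t • u)) ha hb hab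
    obtain rfl : a = 1 - b := by linarith
    have heq : (1 - b) • (x + s • u) + b • (x + t • u) = x + ((1 - b) * s + b * t) • u := by
      module
    rwa [heq] at h

lemma convex_lower_bound' {c : E → ℝ} {c' : E → E} (hconv : ConvexOn ℝ univ c)
    (hc : ∀ x, HasGradientAt c (c' x) x) (x z : E) :
    c x + ⟪c' x, z - x⟫_ℝ ≤ c z := by
  have hφ := convexOn_line' hconv x (z - x)
  have hd : HasDerivAt (fun s : ℝ => c (x + s • (z - x))) ⟪c' x, z - x⟫_ℝ 0 := by
    have := grad_line_hasDerivAt' hc x (z - x) 0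
    simpa using this
  have := hφ.le_slope_of_hasDerivAt (mem_univ (0:ℝ)) (mem_univ (1:ℝ)) one_pos hd
  rw [slope_def_field] at this
  simp only [zero_smul, add_zero, one_smul, add_sub_cancel] at this
  have h1 : (c z - c x) / (1 - 0) = c z - c x := by norm_num
  rw [h1] at this
  linarith

lemma convex_of_monotone_grad' {c : E → ℝ} {c' : E → E} (hc : ∀ x, HasGradientAt c (c' x) x)
    (hmono : ∀ x y, 0 ≤ ⟪c' x - c' y, x - y⟫_ℝ) : ConvexOn ℝ univ c := by
  constructor
  · exact convex_univ
  · intro x _ z _ a b ha hb hab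
    set u := z - x with hu
    have hφd : ∀ t : ℝ, HasDerivAt (fun s : ℝ => c (x + s • u)) ⟪c' (x + t • u), u⟫_ℝ t :=
      grad_line_hasDerivAt' hc x u
    have hdiff : Differentiable ℝ (fun s : ℝ => c (x + s • u)) := fun t => (hφd t).differentiableAt
    have hderiv : ∀ t : ℝ, deriv (fun s : ℝ => c (x + s • u)) t = ⟪c' (x + t • u), u⟫_ℝ :=
      fun t => (hφd t).deriv
    have hmono' : Monotone (deriv (fun s : ℝ => c (x + s • u))) := by
      intro s t hst
      rw [hderiv s, hderiv t]
      rcases eq_or_lt_of_le hst with rfl | hlt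
      · exact le_rfl
      · have h0 := hmono (x + t • u) (x + s • u)
        have he : (x + t • u) - (x + s • u) = (t - s) • u := by module
        rw [he, real_inner_smul_right, inner_sub_left] at h0
        have hts : 0 < t - s := by linarith
        nlinarith [mul_nonneg (le_of_lt hts) (le_of_lt hts)]
    have hφconv := Monotone.convexOn_univ_of_deriv hdiff hmono'
    have h := hφconv.2 (mem_univ (0:ℝ)) (mem_univ (1:ℝ)) ha hb hab
    simp only [smul_eq_mul, mul_zero, mul_one, zero_add] at h
    have h1 : x + b • u = a • x + b • z := by
      rw [hu]; rw [show a • x + b • z = x + b • (z - x) by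
        rw [smul_sub]
        have : a • x = x - b • x := by rw [eq_sub_iff_add_eq, ← add_smul, hab, one_smul]
        rw [this]; abel]
    simp only [zero_smul, add_zero, one_smul, hu] at h
    rw [show x + (z - x) = z by abel] at h
    calc c (a • x + b • z) = c (x + b • u) := by rw [h1]
    _ ≤ a * c x + b * c z := h

variable {f : E → ℝ} {f' : E → E} {μ L : ℝ}

lemma grad_quadratic_sub' (hf' : ∀ x, HasGradientAt f (f' x) x) (a : ℝ) (x : E) :
    HasGradientAt (fun x => a / 2 * ‖x‖ ^ 2 - f x) (a • x - f' x) x := by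
  have h1 : HasFDerivAt (fun x : E => ‖x‖ ^ 2) (2 • (innerSL ℝ x)) x := by
    simpa using (hasFDerivAt_id x).norm_sq
  have h2 : HasFDerivAt (fun x : E => a / 2 * ‖x‖ ^ 2)
      ((a / 2) • (2 • (innerSL ℝ x))) x := h1.const_mul (a / 2)
  have h3 : HasFDerivAt (fun x => a / 2 * ‖x‖ ^ 2 - f x)
      ((a / 2) • (2 • (innerSL ℝ x)) - toDual ℝ E (f' x)) x := h2.sub (hf' x).hasFDerivAt
  have heq : (a / 2) • (2 • (innerSL ℝ x)) - toDual ℝ E (f' x)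
      = toDual ℝ E (a • x - f' x) := by
    ext v
    simp [inner_sub_left, real_inner_smul_left]
    ring
  rw [heq] at h3
  simpa using h3.hasGradientAt

lemma grad_sub_quadratic' (hf' : ∀ x, HasGradientAt f (f' x) x) (a : ℝ) (x : E) :
    HasGradientAt (fun x => f x - a / 2 * ‖x‖ ^ 2) (f' x - a • x) x := by
  have h := (grad_quadratic_sub' hf' a x).hasFDerivAt.neg
  have heq : -(toDual ℝ E (a • x - f' x)) = toDual ℝ E (f' x - a • x) := by
    rw [← map_neg]; congr 1; abel
  rw [heq] at h
  have hfun : (fun y : E => -(a / 2 * ‖y‖ ^ 2 - f y)) = fun y => f y - a / 2 * ‖y‖ ^ 2 := by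
    funext y; ring
  rw [show (-fun x => a / 2 * ‖x‖ ^ 2 - f x) = (fun y : E => -(a / 2 * ‖y‖ ^ 2 - f y)) from rfl,
    hfun] at h
  simpa using h.hasGradientAt

lemma descent_lemma' (hf' : ∀ x, HasGradientAt f (f' x) x)
    (hlip : ∀ x y, ‖f' x - f' y‖ ≤ L * ‖x - y‖) (x z : E) :
    f z ≤ f x + ⟪f' x, z - x⟫_ℝ + L / 2 * ‖z - x‖ ^ 2 := by
  have hq : ∀ y, HasGradientAt (fun x => L / 2 * ‖x‖ ^ 2 - f x) (L • y - f' y) y :=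
    grad_quadratic_sub' hf' L
  have hmono : ∀ x y : E, 0 ≤ ⟪(L • x - f' x) - (L • y - f' y), x - y⟫_ℝ := by
    intro x y
    have he : (L • x - f' x) - (L • y - f' y) = L • (x - y) - (f' x - f' y) := by module
    rw [he, inner_sub_left, real_inner_smul_left, real_inner_self_eq_norm_sq]
    nlinarith [real_inner_le_norm (f' x - f' y) (x - y), hlip x y, norm_nonneg (x - y),
      norm_nonneg (f' x - f' y)]
  have hconv := convex_of_monotone_grad' hq hmono
  have hlow := convex_lower_bound' hconv hq x z
  have e1 : ⟪L • x - f' x, z - x⟫_ℝ = L * ⟪x, z - x⟫_ℝ - ⟪f' x, z - x⟫_ℝ := by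
    simp [inner_sub_left, real_inner_smul_left]
  have e2 : ⟪x, z - x⟫_ℝ = ⟪x, z⟫_ℝ - ‖x‖ ^ 2 := by
    rw [inner_sub_right, real_inner_self_eq_norm_sq]
  have e3 : ‖z - x‖ ^ 2 = ‖z‖ ^ 2 - 2 * ⟪x, z⟫_ℝ + ‖x‖ ^ 2 := by
    rw [norm_sub_sq_real, real_inner_comm]
  rw [e1, e2] at hlow
  rw [e3]
  linarith

/-- interpolation/coercivity inequality -/
lemma coercivity' (hμL : μ ≤ L) (hf : StrongConvexOn univ μ f)
    (hf' : ∀ x, HasGradientAt f (f' x) x)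
    (hlip : ∀ x y, ‖f' x - f' y‖ ≤ L * ‖x - y‖) (x y : E) :
    ‖(f' x - f' y) - μ • (x - y)‖ ^ 2
      ≤ (L - μ) * ⟪(f' x - f' y) - μ • (x - y), x - y⟫_ℝ := by
  have hgrad_h : ∀ z, HasGradientAt (fun x => f x - μ / 2 * ‖x‖ ^ 2) (f' z - μ • z) z :=
    grad_sub_quadratic' hf' μ
  have hconv_h : ConvexOn ℝ univ (fun x => f x - μ / 2 * ‖x‖ ^ 2) :=
    strongConvexOn_iff_convex.mp hf
  have lower_h : ∀ a z : E, (f a - μ / 2 * ‖a‖ ^ 2) + ⟪f' a - μ • a, z - a⟫_ℝ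
      ≤ f z - μ / 2 * ‖z‖ ^ 2 := fun a z => convex_lower_bound' hconv_h hgrad_h a z
  have descent_h : ∀ a z : E, f z - μ / 2 * ‖z‖ ^ 2
      ≤ (f a - μ / 2 * ‖a‖ ^ 2) + ⟪f' a - μ • a, z - a⟫_ℝ + (L - μ) / 2 * ‖z - a‖ ^ 2 := by
    intro a z
    have hd := descent_lemma' hf' hlip a z
    have e1 : ⟪f' a - μ • a, z - a⟫_ℝ
        = ⟪f' a, z - a⟫_ℝ - μ * (⟪a, z⟫_ℝ - ‖a‖ ^ 2) := by
      simp [inner_sub_left, inner_sub_right, real_inner_smul_left, real_inner_self_eq_norm_sq]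
      ring
    have e3 : ‖z - a‖ ^ 2 = ‖z‖ ^ 2 - 2 * ⟪a, z⟫_ℝ + ‖a‖ ^ 2 := by
      rw [norm_sub_sq_real, real_inner_comm]
    rw [e1, e3]
    rw [e3] at hd
    linarith
  set e := (f' x - f' y) - μ • (x - y) with he
  have hee : (f' x - μ • x) - (f' y - μ • y) = e := by rw [he]; module
  rcases eq_or_lt_of_le hμL with rfl | hK
  · -- L = μ : gradients of h coincide, so e = 0
    have heq : ∀ a z : E, f z - μ / 2 * ‖z‖ ^ 2
        = (f a - μ / 2 * ‖a‖ ^ 2) + ⟪f' a - μ • a, z - a⟫_ℝ := by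
      intro a z
      have h1 := lower_h a z
      have h2 := descent_h a z
      simp only [sub_self, zero_div, zero_mul] at h2
      linarith
    have hz : ∀ z : E, ⟪f' x - μ • x, z - x⟫_ℝ - ⟪f' y - μ • y, z - y⟫_ℝ
        = (f y - μ / 2 * ‖y‖ ^ 2) - (f x - μ / 2 * ‖x‖ ^ 2) := by
      intro z
      have h1 := heq x z
      have h2 := heq y z
      linarith
    have h1 := hz x
    have h2 := hz (x + e)
    have h3 : ⟪f' x - μ • x, (x + e) - x⟫_ℝ - ⟪f' x - μ • x, x - x⟫_ℝ
        = ⟪f' y - μ • y, (x + e) - y⟫_ℝ - ⟪f' y - μ • y, x - y⟫_ℝ := by linarith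
    have h4 : (x + e) - x = e := by abel
    have h5 : ((x + e) - y) - (x - y) = e := by abel
    have h6 : ⟪f' x - μ • x, e⟫_ℝ = ⟪f' y - μ • y, e⟫_ℝ := by
      rw [h4, sub_self, inner_zero_right, sub_zero] at h3
      rw [h3]
      rw [show (x + e) - y = (x - y) + e by abel, inner_add_right]
      ring
    have h7 : ⟪e, e⟫_ℝ = 0 := by
      rw [show ⟪e, e⟫_ℝ = ⟪f' x - μ • x, e⟫_ℝ - ⟪f' y - μ • y, e⟫_ℝ from by
        rw [← inner_sub_left, hee], h6]
      ring
    have h8 : ‖e‖ ^ 2 = 0 := by rw [← real_inner_self_eq_norm_sq, h7]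
    rw [h8]
    simp
  · -- μ < L
    set K := L - μ with hKdef
    have hK0 : 0 < K := by simp [hKdef]; linarith
    have key8 : ∀ a z : E,
        (f a - μ / 2 * ‖a‖ ^ 2) + ⟪f' a - μ • a, z - a⟫_ℝ
          + 1 / (2 * K) * ‖(f' z - μ • z) - (f' a - μ • a)‖ ^ 2
        ≤ f z - μ / 2 * ‖z‖ ^ 2 := by
      intro a z
      set ε := (f' z - μ • z) - (f' a - μ • a) with hε
      set w := z - (1 / K) • ε with hw
      have l1 := lower_h a w
      have l2 := descent_h z w
      have hwz : w - z = -((1 / K) • ε) := by rw [hw]; abel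
      have e1 : ⟪f' z - μ • z, w - z⟫_ℝ = -(1 / K) * ⟪f' z - μ • z, ε⟫_ℝ := by
        rw [hwz, inner_neg_right, real_inner_smul_right]; ring
      have e2 : ‖w - z‖ ^ 2 = (1 / K) ^ 2 * ‖ε‖ ^ 2 := by
        rw [hwz, norm_neg, norm_smul, Real.norm_eq_abs, mul_pow, sq_abs]
      have e3 : ⟪f' a - μ • a, w - a⟫_ℝ
          = ⟪f' a - μ • a, z - a⟫_ℝ - (1 / K) * ⟪f' a - μ • a, ε⟫_ℝ := by
        rw [show w - a = (z - a) + (w - z) by abel, inner_add_right, hwz, inner_neg_right,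
          real_inner_smul_right]
        ring
      have e4 : ⟪f' z - μ • z, ε⟫_ℝ - ⟪f' a - μ • a, ε⟫_ℝ = ‖ε‖ ^ 2 := by
        rw [← inner_sub_left, ← hε, real_inner_self_eq_norm_sq]
      rw [e3] at l1
      rw [e1, e2] at l2
      have hK' : K ≠ 0 := ne_of_gt hK0
      have expand : -(1 / K) * ⟪f' z - μ • z, ε⟫_ℝ + K / 2 * ((1 / K) ^ 2 * ‖ε‖ ^ 2)
          + (1 / K) * ⟪f' a - μ • a, ε⟫_ℝ = -(1 / (2 * K)) * ‖ε‖ ^ 2 := by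
        rw [← e4]
        field_simp
        ring
      nlinarith [l1, l2, expand]
    have coco := key8 x y
    have coco' := key8 y x
    have hrev : ‖f' y - μ • y - (f' x - μ • x)‖ = ‖f' x - μ • x - (f' y - μ • y)‖ :=
      norm_sub_rev _ _
    rw [hrev] at coco
    have hinner : ⟪f' x - μ • x, y - x⟫_ℝ + ⟪f' y - μ • y, x - y⟫_ℝ
        = -⟪f' x - μ • x - (f' y - μ • y), x - y⟫_ℝ := by
      rw [show (y : E) - x = -(x - y) by abel]
      simp only [inner_neg_right, inner_sub_left, real_inner_smul_left]
      ring
    have hhalf : 1 / (2 * K) * ‖f' x - μ • x - (f' y - μ • y)‖ ^ 2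
        + 1 / (2 * K) * ‖f' x - μ • x - (f' y - μ • y)‖ ^ 2
        = 1 / K * ‖f' x - μ • x - (f' y - μ • y)‖ ^ 2 := by
      field_simp
      ring
    have h9 : 1 / K * ‖f' x - μ • x - (f' y - μ • y)‖ ^ 2
        ≤ ⟪f' x - μ • x - (f' y - μ • y), x - y⟫_ℝ := by linarith
    rw [hee] at h9
    calc ‖e‖ ^ 2 = K * (1 / K * ‖e‖ ^ 2) := by field_simp
    _ ≤ K * ⟪e, x - y⟫_ℝ := mul_le_mul_of_nonneg_left h9 hK0.le

end helpers

section prox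

variable {E : Type*} [NormedAddCommGroup E] [InnerProductSpace ℝ E]

lemma prox_nonexpansive' {g : E → ℝ} (hg : ConvexOn ℝ univ g) {η : ℝ} (hη : 0 < η)
    (prox : E → E)
    (hprox : ∀ y x, g (prox y) + ‖prox y - y‖ ^ 2 / (2 * η) ≤ g x + ‖x - y‖ ^ 2 / (2 * η))
    (y₁ y₂ : E) : ‖prox y₁ - prox y₂‖ ≤ ‖y₁ - y₂‖ := by
  set p₁ := prox y₁ with hp₁
  set p₂ := prox y₂ with hp₂
  have h2η : (0:ℝ) < 2 * η := by linarith
  have main : ∀ (y p q : E), p = prox y → ∀ t : ℝ, 0 < t → t < 1 →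
      (t * (g p - g q)) * (2 * η) ≤ 2 * t * ⟪p - y, q - p⟫_ℝ + t ^ 2 * ‖q - p‖ ^ 2 := by
    intro y p q hp t ht0 ht1
    have hxt := hprox y (p + t • (q - p))
    rw [← hp] at hxt
    have hgc : g (p + t • (q - p)) ≤ (1 - t) * g p + t * g q := by
      have h := hg.2 (mem_univ p) (mem_univ q) (by linarith : (0:ℝ) ≤ 1 - t) ht0.le (by ring)
      rw [show (1 - t) • p + t • q = p + t • (q - p) by module] at h
      simpa using h
    have hng : ‖p + t • (q - p) - y‖ ^ 2
        = ‖p - y‖ ^ 2 + (2 * t * ⟪p - y, q - p⟫_ℝ + t ^ 2 * ‖q - p‖ ^ 2) := by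
      rw [show p + t • (q - p) - y = (p - y) + t • (q - p) by module]
      rw [norm_add_sq_real, real_inner_smul_right, norm_smul, Real.norm_eq_abs,
        abs_of_nonneg ht0.le, mul_pow]
      ring
    rw [hng] at hxt
    have hsplit : (‖p - y‖ ^ 2 + (2 * t * ⟪p - y, q - p⟫_ℝ + t ^ 2 * ‖q - p‖ ^ 2)) / (2 * η)
        = ‖p - y‖ ^ 2 / (2 * η)
          + (2 * t * ⟪p - y, q - p⟫_ℝ + t ^ 2 * ‖q - p‖ ^ 2) / (2 * η) := by ring
    rw [hsplit] at hxt
    have hD : t * (g p - g q) ≤ (2 * t * ⟪p - y, q - p⟫_ℝ + t ^ 2 * ‖q - p‖ ^ 2) / (2 * η) := by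
      nlinarith [hxt, hgc]
    exact (le_div_iff₀ h2η).mp hD
  have h1 := main y₁ p₁ p₂ hp₁
  have h2 := main y₂ p₂ p₁ hp₂
  have keyt : ∀ t : ℝ, 0 < t → t < 1 →
      (1 - t) * ‖p₁ - p₂‖ ^ 2 ≤ ⟪y₁ - y₂, p₁ - p₂⟫_ℝ := by
    intro t ht0 ht1
    have ha := h1 t ht0 ht1
    have hb := h2 t ht0 ht1
    have hiden : ⟪p₁ - y₁, p₂ - p₁⟫_ℝ + ⟪p₂ - y₂, p₁ - p₂⟫_ℝ
        = ⟪y₁ - y₂, p₁ - p₂⟫_ℝ - ‖p₁ - p₂‖ ^ 2 := by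
      rw [show p₂ - p₁ = -(p₁ - p₂) by abel, ← real_inner_self_eq_norm_sq]
      simp only [inner_neg_right, inner_sub_left, inner_sub_right]
      ring_nf
    have hnorm : ‖p₂ - p₁‖ ^ 2 = ‖p₁ - p₂‖ ^ 2 := by rw [norm_sub_rev]
    nlinarith [ha, hb, hiden, hnorm, ht0, sq_nonneg ‖p₁ - p₂‖]
  rcases eq_or_lt_of_le (norm_nonneg (p₁ - p₂)) with h0 | hpos
  · rw [← h0]; exact norm_nonneg _
  · have hI : ‖p₁ - p₂‖ ^ 2 ≤ ⟪y₁ - y₂, p₁ - p₂⟫_ℝ := by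
      by_contra hcon
      push_neg at hcon
      have hN0 : 0 < ‖p₁ - p₂‖ ^ 2 := by positivity
      set N := ‖p₁ - p₂‖ ^ 2 with hN
      set δ := N - ⟪y₁ - y₂, p₁ - p₂⟫_ℝ with hδ
      have hδ0 : 0 < δ := by simp only [hδ]; linarith
      set t := min (1/2 : ℝ) (δ / (2 * N)) with ht
      have ht0 : 0 < t := by
        apply lt_min (by norm_num)
        positivity
      have ht1 : t < 1 := lt_of_le_of_lt (min_le_left _ _) (by norm_num)
      have hkey := keyt t ht0 ht1
      have hmin : t ≤ δ / (2 * N) := min_le_right _ _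
      have htN : t * N ≤ δ / 2 := by
        have := mul_le_mul_of_nonneg_right hmin (le_of_lt hN0)
        calc t * N ≤ δ / (2 * N) * N := this
        _ = δ / 2 := by field_simp
      simp only [hδ] at htN
      nlinarith [hkey, htN]
    have hcs := real_inner_le_norm (y₁ - y₂) (p₁ - p₂)
    nlinarith [hI, hcs, hpos]

end prox

/-- If `f` is `μ`-strongly convex with `L`-Lipschitz gradient and
`0 < η ≤ 2/(μ+L)`, then `F x = x - η ∇f x` is a `(1 - ημ)`-contraction;
consequently the forward-backward map `prox_{ηg} ∘ F` is also a
`(1 - ημ)`-contraction and has a unique fixed point. -/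
theorem strongly_convex_gradient_map_contraction
    {n : ℕ} (f g : EuclideanSpace ℝ (Fin n) → ℝ)
    (f' : EuclideanSpace ℝ (Fin n) → EuclideanSpace ℝ (Fin n))
    (μ L : ℝ) (hμ : 0 < μ) (hμL : μ ≤ L)
    (hf : StrongConvexOn Set.univ μ f)
    (hf' : ∀ x, HasGradientAt f (f' x) x)
    (hlip : ∀ x y, ‖f' x - f' y‖ ≤ L * ‖x - y‖)
    (hg : ConvexOn ℝ Set.univ g)
    (η : ℝ) (hη₁ : 0 < η) (hη₂ : η ≤ 2 / (μ + L))
    (prox : EuclideanSpace ℝ (Fin n) → EuclideanSpace ℝ (Fin n))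
    (hprox : ∀ y x, g (prox y) + ‖prox y - y‖ ^ 2 / (2 * η)
        ≤ g x + ‖x - y‖ ^ 2 / (2 * η)) :
    (∀ x y : EuclideanSpace ℝ (Fin n),
      ‖(x - η • f' x) - (y - η • f' y)‖ ≤ (1 - η * μ) * ‖x - y‖) ∧
    (∀ x y : EuclideanSpace ℝ (Fin n),
      ‖prox (x - η • f' x) - prox (y - η • f' y)‖ ≤ (1 - η * μ) * ‖x - y‖) ∧
    (∃! xstar : EuclideanSpace ℝ (Fin n), prox (xstar - η • f' xstar) = xstar) := by
  have hμL2 : (0:ℝ) < μ + L := by linarith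
  have hsum : η * (μ + L) ≤ 2 := by
    rw [le_div_iff₀ hμL2] at hη₂; exact hη₂
  have h1ημ : 0 ≤ 1 - η * μ := by nlinarith
  have part1 : ∀ x y : EuclideanSpace ℝ (Fin n),
      ‖(x - η • f' x) - (y - η • f' y)‖ ≤ (1 - η * μ) * ‖x - y‖ := by
    intro x y
    have hco := coercivity' hμL hf hf' hlip x y
    set u := x - y with hu
    set e := (f' x - f' y) - μ • u with heu
    have hiu : 0 ≤ ⟪e, u⟫_ℝ := by
      rcases eq_or_lt_of_le hμL with rfl | hK
      · have h0 : ‖e‖ ^ 2 ≤ 0 := by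
          have : (μ - μ) * ⟪e, u⟫_ℝ = 0 := by ring
          linarith [hco, this.le, this.ge]
        have hne : ‖e‖ = 0 := by nlinarith [norm_nonneg e]
        have habs := abs_real_inner_le_norm e u
        rw [hne, zero_mul] at habs
        nlinarith [neg_abs_le ⟪e, u⟫_ℝ, le_abs_self ⟪e, u⟫_ℝ]
      · nlinarith [sq_nonneg ‖e‖]
    have key : η ^ 2 * ‖e‖ ^ 2 ≤ 2 * η * (1 - η * μ) * ⟪e, u⟫_ℝ := by
      rcases eq_or_lt_of_le hμL with rfl | hK
      · have h0 : ‖e‖ ^ 2 ≤ 0 := by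
          have : (μ - μ) * ⟪e, u⟫_ℝ = 0 := by ring
          linarith [hco, this.le, this.ge]
        nlinarith [sq_nonneg η, mul_nonneg (mul_nonneg (by linarith : (0:ℝ) ≤ 2 * η) h1ημ) hiu]
      · have hfac : 0 ≤ 2 * (1 - η * μ) - η * (L - μ) := by nlinarith
        nlinarith [mul_le_mul_of_nonneg_left hco (sq_nonneg η),
          mul_nonneg hfac (mul_nonneg hη₁.le hiu)]
    have hid : (x - η • f' x) - (y - η • f' y) = (1 - η * μ) • u - η • e := by
      rw [heu, hu]; module
    rw [hid]
    have hsq : ‖(1 - η * μ) • u - η • e‖ ^ 2 ≤ ((1 - η * μ) * ‖u‖) ^ 2 := by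
      rw [norm_sub_sq_real, real_inner_smul_left, real_inner_smul_right, norm_smul, norm_smul,
        Real.norm_eq_abs, Real.norm_eq_abs, abs_of_nonneg h1ημ, abs_of_nonneg hη₁.le]
      have hcomm : ⟪u, e⟫_ℝ = ⟪e, u⟫_ℝ := real_inner_comm e u
      rw [hcomm]
      nlinarith [key]
    have h := Real.sqrt_le_sqrt hsq
    rwa [Real.sqrt_sq (norm_nonneg _), Real.sqrt_sq (mul_nonneg h1ημ (norm_nonneg _))] at h
  have hnon := prox_nonexpansive' hg hη₁ prox hprox
  have part2 : ∀ x y : EuclideanSpace ℝ (Fin n),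
      ‖prox (x - η • f' x) - prox (y - η • f' y)‖ ≤ (1 - η * μ) * ‖x - y‖ :=
    fun x y => (hnon _ _).trans (part1 x y)
  refine ⟨part1, part2, ?_⟩
  -- Banach fixed point
  set T : EuclideanSpace ℝ (Fin n) → EuclideanSpace ℝ (Fin n) :=
    fun x => prox (x - η • f' x) with hT
  have hK1 : (1 - η * μ) < 1 := by nlinarith
  set K : NNReal := ⟨1 - η * μ, h1ημ⟩ with hKdef
  have hlipT : LipschitzWith K T := by
    apply LipschitzWith.of_dist_le_mul
    intro x y
    rw [dist_eq_norm, dist_eq_norm]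
    exact part2 x y
  have hcontr : ContractingWith K T := by
    constructor
    · rw [← NNReal.coe_lt_one]
      exact hK1
    · exact hlipT
  refine ⟨hcontr.fixedPoint T, ?_, ?_⟩
  · exact hcontr.fixedPoint_isFixedPt
  · intro z hz
    exact hcontr.fixedPoint_unique hz
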